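/- arXiv:1807.00982 — 3 statements merged into one kernel-verified Lean document; each statement's English description precedes it below -/
import Mathlib

section
/- For any topological space X with basepoint x₀, the fundamental group π₁(X,x₀) equipped with the path Spanier topology (the subgroup topology determined by the neighbourhood family of all path Spanier subgroups) is a topological group. -/
open TopologicalSpace
open scoped Topology Pointwise

attribute [local instance] Path.Homotopic.setoid

/-- The collection of all left cosets `g • H` of members of a family of subgroups. -/
def leftCosets {G : Type*} [Group G] (Sig : Set (Subgroup G)) : Set (Set G) :=
  {s | ∃ g : G, ∃ H ∈ Sig, s = g • (H : Set G)}

/-- A neighbourhood family on a group `G`: a (nonempty) collection of subgroups such that any two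
members contain a common member. -/
def IsNbhdFamily {G : Type*} [Group G] (Sig : Set (Subgroup G)) : Prop :=
  Sig.Nonempty ∧ ∀ H ∈ Sig, ∀ K ∈ Sig, ∃ S ∈ Sig, S ≤ H ⊓ K

/-- The subgroup topology on `G` determined by the family `Sig`: the topology generated by all
left cosets of members of `Sig`. -/
def subgroupTopology {G : Type*} [Group G] (Sig : Set (Subgroup G)) : TopologicalSpace G :=
  generateFrom (leftCosets Sig)

variable {X : Type*} [TopologicalSpace X]

/-- The homotopy class of a loop, as an element of the fundamental group. -/
noncomputable def fgClass {x₀ : X} (γ : Path x₀ x₀) : FundamentalGroup X x₀ :=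
  FundamentalGroup.fromPath ⟦γ⟧

/-- An open cover of the space `X`. -/
def IsOpenCover (U : Set (Set X)) : Prop :=
  (∀ u ∈ U, IsOpen u) ∧ ⋃₀ U = Set.univ

/-- The Spanier subgroup `π(𝒰, x₀)` of the fundamental group determined by an open cover `𝒰`:
the subgroup generated by all classes `[α * β * α⁻¹]` with `α` a path starting at `x₀` and `β`
a loop at `α(1)` lying in some member of `𝒰`. -/
noncomputable def spanierSubgroup (U : Set (Set X)) (x₀ : X) :
    Subgroup (FundamentalGroup X x₀) :=
  Subgroup.closure
    {g | ∃ (x : X) (α : Path x₀ x) (β : Path x x) (u : Set X), u ∈ U ∧ Set.range β ⊆ u ∧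
      g = fgClass ((α.trans β).trans α.symm)}

/-- The collection of all Spanier subgroups of `π₁(X, x₀)`. -/
def spanierFamily (x₀ : X) : Set (Subgroup (FundamentalGroup X x₀)) :=
  {H | ∃ U : Set (Set X), IsOpenCover U ∧ H = spanierSubgroup U x₀}

/-- A path open cover of `(X, x₀)`: a family of open sets `V x α`, indexed by the paths `α` in
`X` from `x₀` to `x`, with `α(1) ∈ V x α`. -/
def IsPathOpenCover (x₀ : X) (V : (x : X) → Path x₀ x → Set X) : Prop :=
  ∀ (x : X) (α : Path x₀ x), IsOpen (V x α) ∧ α 1 ∈ V x α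

/-- The path Spanier subgroup `π̃(𝒱, x₀)` determined by a path open cover `𝒱`: the subgroup
generated by all classes `[α * β * α⁻¹]` with `α` a path starting at `x₀` and `β` a loop at
`α(1)` lying in `V_α`. -/
noncomputable def pathSpanierSubgroup (x₀ : X) (V : (x : X) → Path x₀ x → Set X) :
    Subgroup (FundamentalGroup X x₀) :=
  Subgroup.closure
    {g | ∃ (x : X) (α : Path x₀ x) (β : Path x x), Set.range β ⊆ V x α ∧
      g = fgClass ((α.trans β).trans α.symm)}

/-- The collection of all path Spanier subgroups of `π₁(X, x₀)`. -/
def pathSpanierFamily (x₀ : X) : Set (Subgroup (FundamentalGroup X x₀)) :=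
  {H | ∃ V : (x : X) → Path x₀ x → Set X, IsPathOpenCover x₀ V ∧ H = pathSpanierSubgroup x₀ V}


open CategoryTheory in
private lemma exists_fgClass {x₀ : X} (g : FundamentalGroup X x₀) :
    ∃ γ : Path x₀ x₀, g = fgClass γ := by
  obtain ⟨γ, hγ⟩ := Quotient.exists_rep g
  exact ⟨γ, hγ.symm⟩

private def toHom {x y : X} (p : Path.Homotopic.Quotient x y) :
    FundamentalGroupoid.mk x ⟶ FundamentalGroupoid.mk y := p

open CategoryTheory in
private lemma trans_quot {x y z : X} (p : Path x y) (q : Path y z) :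
    toHom ⟦p.trans q⟧ = toHom ⟦p⟧ ≫ toHom ⟦q⟧ :=
  Path.Homotopic.Quotient.mk_trans p q

open CategoryTheory in
private lemma symm_quot {x y : X} (p : Path x y) :
    toHom ⟦p.symm⟧ = Groupoid.inv (toHom ⟦p⟧) := rfl

open CategoryTheory in
private lemma conj_fgClass {x₀ x : X} (δ : Path x₀ x₀) (α : Path x₀ x) (β : Path x x) :
    fgClass δ.symm * fgClass ((α.trans β).trans α.symm) * (fgClass δ.symm)⁻¹ =
      fgClass (((δ.trans α).trans β).trans (δ.trans α).symm) := by
  show Groupoid.inv (toHom ⟦δ.symm⟧) ≫ (toHom ⟦(α.trans β).trans α.symm⟧ ≫ toHom ⟦δ.symm⟧)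
      = toHom ⟦((δ.trans α).trans β).trans (δ.trans α).symm⟧
  rw [show ((δ.trans α).symm) = α.symm.trans δ.symm from Path.trans_symm δ α]
  simp only [trans_quot, symm_quot, Groupoid.inv_eq_inv, Category.assoc, IsIso.inv_comp,
    IsIso.inv_inv]

private theorem topGroup_of_conj {G : Type*} [Group G] (Sig : Set (Subgroup G))
    (hconj : ∀ g : G, ∀ H ∈ Sig, ∃ K ∈ Sig, ∀ k ∈ K, g * k * g⁻¹ ∈ H) :
    @IsTopologicalGroup G (subgroupTopology Sig) _ := by
  letI : TopologicalSpace G := subgroupTopology Sig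
  have hopen : ∀ (a : G) (K : Subgroup G), K ∈ Sig → IsOpen (a • (K : Set G)) := fun a K hK =>
    TopologicalSpace.GenerateOpen.basic _ ⟨a, K, hK, rfl⟩
  refine { continuous_mul := ?_, continuous_inv := ?_ }
  · apply continuous_generateFrom_iff.mpr
    rintro s ⟨g, H, hH, rfl⟩
    rw [isOpen_iff_forall_mem_open]
    rintro ⟨a, b⟩ hab
    rw [Set.mem_preimage, Set.mem_smul_set_iff_inv_smul_mem] at hab
    obtain ⟨K, hK, hKc⟩ := hconj b⁻¹ H hH
    refine ⟨(a • (K : Set G)) ×ˢ (b • (H : Set G)), ?_, (hopen a K hK).prod (hopen b H hH), ?_⟩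
    · rintro ⟨u, v⟩ ⟨hu, hv⟩
      rw [Set.mem_smul_set_iff_inv_smul_mem] at hu hv
      rw [Set.mem_preimage, Set.mem_smul_set_iff_inv_smul_mem]
      have h2 := hKc _ hu
      have : g⁻¹ • (u * v) = (g⁻¹ * (a * b)) * (b⁻¹ * (a⁻¹ * u) * b⁻¹⁻¹) * (b⁻¹ * v) := by
        simp only [smul_eq_mul]; group
      rw [this]
      exact H.mul_mem (H.mul_mem hab h2) hv
    · constructor <;> rw [Set.mem_smul_set_iff_inv_smul_mem]
      · simpa using K.one_mem
      · simpa using H.one_mem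
  · apply continuous_generateFrom_iff.mpr
    rintro s ⟨g, H, hH, rfl⟩
    rw [isOpen_iff_forall_mem_open]
    intro a ha
    rw [Set.mem_preimage, Set.mem_smul_set_iff_inv_smul_mem] at ha
    obtain ⟨K, hK, hKc⟩ := hconj a H hH
    refine ⟨a • (K : Set G), ?_, hopen a K hK, ?_⟩
    · intro u hu
      rw [Set.mem_smul_set_iff_inv_smul_mem] at hu
      rw [Set.mem_preimage, Set.mem_smul_set_iff_inv_smul_mem]
      have h2 := hKc _ (K.inv_mem hu)
      have : g⁻¹ • u⁻¹ = (g⁻¹ * a⁻¹) * (a * (a⁻¹ * u)⁻¹ * a⁻¹) := by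
        simp only [smul_eq_mul]; group
      rw [this]
      exact H.mul_mem ha h2
    · rw [Set.mem_smul_set_iff_inv_smul_mem]; simpa using K.one_mem

private lemma pathSpanier_conj (x₀ : X) (g : FundamentalGroup X x₀)
    (H : Subgroup (FundamentalGroup X x₀)) (hH : H ∈ pathSpanierFamily x₀) :
    ∃ K ∈ pathSpanierFamily x₀, ∀ k ∈ K, g * k * g⁻¹ ∈ H := by
  obtain ⟨V, hV, rfl⟩ := hH
  obtain ⟨γ, rfl⟩ := exists_fgClass g
  set δ : Path x₀ x₀ := γ.symm with hδdef
  have hδ : fgClass δ.symm = fgClass γ := by rw [hδdef, Path.symm_symm]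
  refine ⟨pathSpanierSubgroup x₀ (fun x α => V x (δ.trans α)), ⟨_, ?_, rfl⟩, ?_⟩
  · intro x α
    refine ⟨(hV x (δ.trans α)).1, ?_⟩
    have h2 := (hV x (δ.trans α)).2
    have he : (δ.trans α) 1 = α 1 := by rw [(δ.trans α).target, α.target]
    rwa [he] at h2
  · intro k hk
    have hle : pathSpanierSubgroup x₀ (fun x α => V x (δ.trans α)) ≤
        Subgroup.comap (MulAut.conj (fgClass γ)).toMonoidHom (pathSpanierSubgroup x₀ V) := by
      apply Subgroup.closure_le _ |>.mpr
      rintro s ⟨x, α, β, hβ, rfl⟩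
      rw [SetLike.mem_coe, Subgroup.mem_comap]
      apply Subgroup.subset_closure
      refine ⟨x, δ.trans α, β, hβ, ?_⟩
      have h := conj_fgClass δ α β
      rw [hδ] at h
      simpa [MulAut.conj_apply] using h
    have := hle hk
    rwa [Subgroup.mem_comap] at this

/-- the fundamental group with the path Spanier topology is a topological
group. -/
theorem statement16 (x₀ : X) :
    @IsTopologicalGroup (FundamentalGroup X x₀) (subgroupTopology (pathSpanierFamily x₀)) _ :=
  topGroup_of_conj _ (pathSpanier_conj x₀)
end

section
/- Let X be a topological space with basepoint x₀ whose path component containing x₀ is covered by every open cover under consideration. For every open cover 𝒰 of X there exists a path open cover 𝒱 of (X,x₀) with π̃(𝒱,x₀) ⊆ π(𝒰,x₀); consequently, every Spanier subgroup of π₁(X,x₀) contains a path Spanier subgroup, and the path Spanier topology on π₁(X,x₀) is finer than the Spanier subgroup topology. -/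
open TopologicalSpace
open scoped Topology Pointwise

attribute [local instance] Path.Homotopic.setoid

variable {X : Type*} [TopologicalSpace X]

/-- every Spanier subgroup contains a path Spanier subgroup (for every open cover
`𝒰` there is a path open cover `𝒱` with `π̃(𝒱, x₀) ⊆ π(𝒰, x₀)`), and consequently the path
Spanier topology on `π₁(X, x₀)` is finer than the Spanier subgroup topology.  (Open covers of
`X` in particular cover the path component of `x₀`.) -/
theorem statement17 (x₀ : X) :
    (∀ U : Set (Set X), IsOpenCover U → ∃ V : (x : X) → Path x₀ x → Set X,
        IsPathOpenCover x₀ V ∧ pathSpanierSubgroup x₀ V ≤ spanierSubgroup U x₀) ∧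
    subgroupTopology (pathSpanierFamily x₀) ≤ subgroupTopology (spanierFamily x₀) := by
  have key : ∀ U : Set (Set X), IsOpenCover U → ∃ V : (x : X) → Path x₀ x → Set X,
      IsPathOpenCover x₀ V ∧ pathSpanierSubgroup x₀ V ≤ spanierSubgroup U x₀ := by
    intro U hU
    have hmem : ∀ y : X, ∃ u ∈ U, y ∈ u := by
      intro y
      have : y ∈ ⋃₀ U := hU.2 ▸ Set.mem_univ y
      simpa using this
    choose u hu hyu using hmem
    refine ⟨fun x α => u (α 1), ?_, ?_⟩
    · intro x α; exact ⟨hU.1 _ (hu _), hyu _⟩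
    · apply Subgroup.closure_mono
      rintro g ⟨x, α, β, hβ, rfl⟩
      exact ⟨x, α, β, u (α 1), hu _, hβ, rfl⟩
  refine ⟨key, ?_⟩
  apply le_generateFrom
  rintro s ⟨g, H, ⟨U, hU, rfl⟩, rfl⟩
  obtain ⟨V, hV, hle⟩ := key U hU
  have hopen : ∀ g' : FundamentalGroup X x₀,
      IsOpen[subgroupTopology (pathSpanierFamily x₀)]
        (g' • (pathSpanierSubgroup x₀ V : Set (FundamentalGroup X x₀))) :=
    fun g' => TopologicalSpace.isOpen_generateFrom_of_mem ⟨g', _, ⟨V, hV, rfl⟩, rfl⟩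
  have heq : g • (spanierSubgroup U x₀ : Set (FundamentalGroup X x₀)) =
      ⋃ h ∈ (spanierSubgroup U x₀ : Set (FundamentalGroup X x₀)), (g * h) • (pathSpanierSubgroup x₀ V : Set (FundamentalGroup X x₀)) := by
    ext y
    simp only [Set.mem_iUnion, Set.mem_smul_set, smul_eq_mul]
    constructor
    · rintro ⟨h, hh, rfl⟩
      exact ⟨h, hh, 1, (pathSpanierSubgroup x₀ V).one_mem, by simp⟩
    · rintro ⟨h, hh, k, hk, rfl⟩
      exact ⟨h * k, (spanierSubgroup U x₀).mul_mem hh (hle hk), (mul_assoc ..).symm⟩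
  rw [heq]
  exact @isOpen_biUnion _ _ (subgroupTopology (pathSpanierFamily x₀)) _ _ fun h _ => hopen _
end

section
/- Let X be a connected and locally path connected topological space with basepoint x₀. Then π₁^pSpan(X,x₀) (the fundamental group with the path Spanier topology) is discrete if and only if π₁^Span(X,x₀) (the fundamental group with the Spanier subgroup topology) is discrete. -/
open TopologicalSpace
open scoped Topology Pointwise

attribute [local instance] Path.Homotopic.setoid

/-! ### Auxiliary lemmas -/

section SubgroupTopLemmas

variable {G : Type*} [Group G]

lemma subgroupTopology_eq_bot_of_bot_mem {Sig : Set (Subgroup G)} (h : ⊥ ∈ Sig) :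
    subgroupTopology Sig = ⊥ := by
  apply eq_bot_of_singletons_open
  intro g
  apply TopologicalSpace.GenerateOpen.basic
  refine ⟨g, ⊥, h, ?_⟩
  ext y
  simp [Set.mem_smul_set_iff_inv_smul_mem, eq_comm, eq_inv_mul_iff_mul_eq]

lemma exists_bot_of_subgroupTopology_eq_bot {Sig : Set (Subgroup G)}
    (hne : Sig.Nonempty) (hdir : ∀ H ∈ Sig, ∀ K ∈ Sig, ∃ S ∈ Sig, S ≤ H ⊓ K)
    (h : subgroupTopology Sig = ⊥) : ∃ H ∈ Sig, H = ⊥ := by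
  have h1 : {(1 : G)} ∈ @nhds G (subgroupTopology Sig) 1 := by
    rw [h]
    letI : TopologicalSpace G := ⊥
    haveI : DiscreteTopology G := ⟨rfl⟩
    exact IsOpen.mem_nhds (isOpen_discrete _) rfl
  rw [show subgroupTopology Sig = generateFrom (leftCosets Sig) from rfl,
    TopologicalSpace.nhds_generateFrom, iInf_subtype'] at h1
  have key : ∀ s ∈ {s | 1 ∈ s ∧ s ∈ leftCosets Sig}, ∃ H ∈ Sig, s = (H : Set G) := by
    rintro s ⟨h1s, g, H, hH, rfl⟩
    refine ⟨H, hH, ?_⟩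
    have hg : g ∈ H := by
      rcases h1s with ⟨y, hy, hy1⟩
      have : g * y = 1 := hy1
      have : g = y⁻¹ := eq_inv_of_mul_eq_one_left this
      exact this ▸ H.inv_mem hy
    ext y
    simp only [Set.mem_smul_set, smul_eq_mul]
    constructor
    · rintro ⟨z, hz, rfl⟩; exact H.mul_mem hg hz
    · intro hy; exact ⟨g⁻¹ * y, H.mul_mem (H.inv_mem hg) hy, by group⟩
  have hne' : Nonempty {s // s ∈ {s | 1 ∈ s ∧ s ∈ leftCosets Sig}} := by
    obtain ⟨H, hH⟩ := hne
    exact ⟨⟨(H : Set G), H.one_mem, 1, H, hH, by simp⟩⟩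
  rw [Filter.mem_iInf_of_directed] at h1
  · obtain ⟨⟨s, hs⟩, hmem⟩ := h1
    obtain ⟨H, hH, rfl⟩ := key s hs
    refine ⟨H, hH, ?_⟩
    have : (H : Set G) ⊆ {1} := hmem
    ext y; simp only [Subgroup.mem_bot]
    exact ⟨fun hy => this hy, fun hy => hy ▸ H.one_mem⟩
  · rintro ⟨s, hs⟩ ⟨t, ht⟩
    obtain ⟨H, hH, rfl⟩ := key s hs
    obtain ⟨K, hK, rfl⟩ := key t ht
    obtain ⟨S, hS, hle⟩ := hdir H hH K hK
    refine ⟨⟨(S : Set G), S.one_mem, 1, S, hS, by simp⟩, ?_, ?_⟩ <;>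
      · simp only [Filter.principal_mono]
        intro x hx
        first
          | exact (hle.trans inf_le_left) hx
          | exact (hle.trans inf_le_right) hx

end SubgroupTopLemmas

variable {X : Type*} [TopologicalSpace X]

open CategoryTheory in
lemma quot_conj_eq_refl_iff {x y : X} (γ : Path x y) (β : Path y y) :
    (⟦(γ.trans β).trans γ.symm⟧ : Path.Homotopic.Quotient x x) = ⟦Path.refl x⟧ ↔
      (⟦β⟧ : Path.Homotopic.Quotient y y) = ⟦Path.refl y⟧ := by
  let xx : FundamentalGroupoid X := ⟨x⟩
  let yy : FundamentalGroupoid X := ⟨y⟩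
  let d : xx ⟶ yy := ⟦γ⟧
  let b : yy ⟶ yy := ⟦β⟧
  have hd : (⟦(γ.trans β).trans γ.symm⟧ : Path.Homotopic.Quotient x x) =
      ((d ≫ b) ≫ Groupoid.inv d : xx ⟶ xx) := by
    show _ = ((⟦γ⟧ ≫ ⟦β⟧ : xx ⟶ yy) ≫ Groupoid.inv (⟦γ⟧ : xx ⟶ yy) : xx ⟶ xx)
    rw [show (Groupoid.inv (⟦γ⟧ : xx ⟶ yy) : yy ⟶ xx) = ⟦γ.symm⟧ from rfl]
    rfl
  rw [hd]
  have h1 : (⟦Path.refl x⟧ : Path.Homotopic.Quotient x x) = (𝟙 xx : xx ⟶ xx) := rfl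
  have h2 : (⟦Path.refl y⟧ : Path.Homotopic.Quotient y y) = (𝟙 yy : yy ⟶ yy) := rfl
  rw [h1, h2]
  constructor
  · intro h
    have := congrArg (fun f => Groupoid.inv d ≫ f ≫ d) h
    simp only [Category.assoc, Groupoid.inv_comp, Groupoid.comp_inv, Category.comp_id,
      Category.id_comp] at this ⊢
    rw [← Category.assoc, Groupoid.inv_comp, Category.id_comp] at this
    exact this
  · intro h
    rw [show b = 𝟙 yy from h]
    simp
    rfl

open CategoryTheory in
lemma fgClass_eq_one_iff {x₀ : X} (l : Path x₀ x₀) :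
    fgClass l = 1 ↔ (⟦l⟧ : Path.Homotopic.Quotient x₀ x₀) = ⟦Path.refl x₀⟧ := by
  constructor
  · intro h
    exact h
  · intro h
    exact h

/-- Conjugation generator triviality transfers between basepoint paths. -/
lemma fgClass_conj_eq_one_iff {x₀ y : X} (δ : Path x₀ y) (β : Path y y) :
    fgClass ((δ.trans β).trans δ.symm) = 1 ↔
      (⟦β⟧ : Path.Homotopic.Quotient y y) = ⟦Path.refl y⟧ := by
  rw [fgClass_eq_one_iff, quot_conj_eq_refl_iff]

/-- Every open cover admits a path open cover whose path Spanier subgroup is contained in the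
Spanier subgroup of the cover. -/
lemma exists_pathCover_le {U : Set (Set X)} (hU : IsOpenCover U) (x₀ : X) :
    ∃ V, IsPathOpenCover x₀ V ∧ pathSpanierSubgroup x₀ V ≤ spanierSubgroup U x₀ := by
  have hex : ∀ (x : X) (α : Path x₀ x), ∃ u, u ∈ U ∧ α 1 ∈ u := by
    intro x α
    have h : (α 1) ∈ ⋃₀ U := hU.2 ▸ Set.mem_univ _
    obtain ⟨u, hu, hmem⟩ := h
    exact ⟨u, hu, hmem⟩
  choose V hVU hVmem using hex
  refine ⟨V, fun x α => ⟨hU.1 _ (hVU x α), hVmem x α⟩, Subgroup.closure_mono ?_⟩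
  rintro g ⟨x, α, β, hβ, rfl⟩
  exact ⟨x, α, β, V x α, hVU x α, hβ, rfl⟩

/-- If some path Spanier subgroup is trivial, then some Spanier subgroup is trivial. -/
lemma exists_cover_of_pathCover [ConnectedSpace X] [LocallyPathConnectedSpace X] {x₀ : X}
    {V : (x : X) → Path x₀ x → Set X} (hV : IsPathOpenCover x₀ V)
    (h : pathSpanierSubgroup x₀ V = ⊥) :
    ∃ U, _root_.IsOpenCover U ∧ spanierSubgroup U x₀ = ⊥ := by
  haveI : PathConnectedSpace X := pathConnectedSpace_iff_connectedSpace.mpr ‹_›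
  refine ⟨{u | ∃ (x : X) (α : Path x₀ x), u = pathComponentIn (V x α) x}, ⟨?_, ?_⟩, ?_⟩
  · rintro u ⟨x, α, rfl⟩
    exact ((hV x α).1).pathComponentIn x
  · ext y
    simp only [Set.mem_sUnion, Set.mem_univ, iff_true]
    have α := PathConnectedSpace.somePath x₀ y
    refine ⟨pathComponentIn (V y α) y, ⟨y, α, rfl⟩, mem_pathComponentIn_self ?_⟩
    have := (hV y α).2
    rwa [α.target] at this
  · rw [eq_bot_iff]
    refine (Subgroup.closure_le _).mpr ?_
    rintro g ⟨y, δ, β, u, ⟨x, α, rfl⟩, hβ, rfl⟩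
    have hy : y ∈ pathComponentIn (V x α) x := hβ ⟨0, β.source⟩
    obtain ⟨γ, hγ⟩ := hy
    have hL : Set.range ((γ.trans β).trans γ.symm) ⊆ V x α := by
      rw [Path.trans_range, Path.trans_range, Path.symm_range]
      have hr : Set.range γ ⊆ V x α := by rintro _ ⟨t, rfl⟩; exact hγ t
      have hb : Set.range β ⊆ V x α := hβ.trans pathComponentIn_subset
      exact Set.union_subset (Set.union_subset hr hb) hr
    have h1 : fgClass ((α.trans ((γ.trans β).trans γ.symm)).trans α.symm) = 1 := by
      have hmem : fgClass ((α.trans ((γ.trans β).trans γ.symm)).trans α.symm) ∈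
          pathSpanierSubgroup x₀ V :=
        Subgroup.subset_closure ⟨x, α, (γ.trans β).trans γ.symm, hL, rfl⟩
      rw [h, Subgroup.mem_bot] at hmem
      exact hmem
    have hβ1 : (⟦β⟧ : Path.Homotopic.Quotient y y) = ⟦Path.refl y⟧ :=
      (quot_conj_eq_refl_iff γ β).mp ((fgClass_conj_eq_one_iff α _).mp h1)
    exact SetLike.mem_coe.mpr (Subgroup.mem_bot.mpr ((fgClass_conj_eq_one_iff δ β).mpr hβ1))


lemma spanierSubgroup_le_of_refines {U U' : Set (Set X)} (x₀ : X)
    (h : ∀ u ∈ U', ∃ w ∈ U, u ⊆ w) : spanierSubgroup U' x₀ ≤ spanierSubgroup U x₀ :=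
  Subgroup.closure_mono (by
    rintro g ⟨x, α, β, u, hu, hβ, rfl⟩
    obtain ⟨w, hw, hsub⟩ := h u hu
    exact ⟨x, α, β, w, hw, hβ.trans hsub, rfl⟩)

lemma pathSpanierSubgroup_le_of_le {x₀ : X} {V V' : (x : X) → Path x₀ x → Set X}
    (h : ∀ x α, V' x α ⊆ V x α) :
    pathSpanierSubgroup x₀ V' ≤ pathSpanierSubgroup x₀ V :=
  Subgroup.closure_mono (by
    rintro g ⟨x, α, β, hβ, rfl⟩
    exact ⟨x, α, β, hβ.trans (h x α), rfl⟩)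

lemma spanierFamily_nonempty (x₀ : X) : (spanierFamily x₀).Nonempty :=
  ⟨spanierSubgroup {Set.univ} x₀, {Set.univ},
    ⟨by rintro u rfl; exact isOpen_univ, by simp⟩, rfl⟩

lemma pathSpanierFamily_nonempty (x₀ : X) : (pathSpanierFamily x₀).Nonempty :=
  ⟨pathSpanierSubgroup x₀ (fun _ _ => Set.univ), fun _ _ => Set.univ,
    fun _ _ => ⟨isOpen_univ, Set.mem_univ _⟩, rfl⟩

lemma spanierFamily_directed (x₀ : X) : ∀ H ∈ spanierFamily x₀, ∀ K ∈ spanierFamily x₀,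
    ∃ S ∈ spanierFamily x₀, S ≤ H ⊓ K := by
  rintro _ ⟨U₁, hU₁, rfl⟩ _ ⟨U₂, hU₂, rfl⟩
  set U₃ : Set (Set X) := {u | ∃ u₁ ∈ U₁, ∃ u₂ ∈ U₂, u = u₁ ∩ u₂} with hU₃def
  have hU₃ : IsOpenCover U₃ := by
    constructor
    · rintro u ⟨u₁, h₁, u₂, h₂, rfl⟩
      exact (hU₁.1 _ h₁).inter (hU₂.1 _ h₂)
    · ext y
      simp only [Set.mem_sUnion, Set.mem_univ, iff_true]
      have h₁ : y ∈ ⋃₀ U₁ := hU₁.2 ▸ Set.mem_univ _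
      have h₂ : y ∈ ⋃₀ U₂ := hU₂.2 ▸ Set.mem_univ _
      obtain ⟨u₁, hu₁, hy₁⟩ := h₁
      obtain ⟨u₂, hu₂, hy₂⟩ := h₂
      exact ⟨u₁ ∩ u₂, ⟨u₁, hu₁, u₂, hu₂, rfl⟩, hy₁, hy₂⟩
  refine ⟨spanierSubgroup U₃ x₀, ⟨U₃, hU₃, rfl⟩, le_inf ?_ ?_⟩
  · exact spanierSubgroup_le_of_refines x₀
      (by rintro u ⟨u₁, h₁, u₂, h₂, rfl⟩; exact ⟨u₁, h₁, Set.inter_subset_left⟩)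
  · exact spanierSubgroup_le_of_refines x₀
      (by rintro u ⟨u₁, h₁, u₂, h₂, rfl⟩; exact ⟨u₂, h₂, Set.inter_subset_right⟩)

lemma pathSpanierFamily_directed (x₀ : X) :
    ∀ H ∈ pathSpanierFamily x₀, ∀ K ∈ pathSpanierFamily x₀,
      ∃ S ∈ pathSpanierFamily x₀, S ≤ H ⊓ K := by
  rintro _ ⟨V₁, hV₁, rfl⟩ _ ⟨V₂, hV₂, rfl⟩
  refine ⟨pathSpanierSubgroup x₀ (fun x α => V₁ x α ∩ V₂ x α),
    ⟨fun x α => V₁ x α ∩ V₂ x α,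
      fun x α => ⟨((hV₁ x α).1).inter ((hV₂ x α).1), (hV₁ x α).2, (hV₂ x α).2⟩, rfl⟩,
    le_inf ?_ ?_⟩
  · exact pathSpanierSubgroup_le_of_le fun x α => Set.inter_subset_left
  · exact pathSpanierSubgroup_le_of_le fun x α => Set.inter_subset_right

/-- for a connected, locally path connected space, the path Spanier topology on
`π₁(X, x₀)` is discrete iff the Spanier subgroup topology is discrete. -/
theorem statement18 [ConnectedSpace X] [LocallyPathConnectedSpace X] (x₀ : X) :
    subgroupTopology (pathSpanierFamily x₀) = ⊥ ↔
      subgroupTopology (spanierFamily x₀) = ⊥ := by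
  constructor
  · intro h
    obtain ⟨H, hmem, hbot⟩ := exists_bot_of_subgroupTopology_eq_bot
      (pathSpanierFamily_nonempty x₀) (pathSpanierFamily_directed x₀) h
    obtain ⟨V, hV, rfl⟩ := hmem
    obtain ⟨U, hU, hUbot⟩ := exists_cover_of_pathCover hV hbot
    exact subgroupTopology_eq_bot_of_bot_mem ⟨U, hU, hUbot.symm⟩
  · intro h
    obtain ⟨H, hmem, hbot⟩ := exists_bot_of_subgroupTopology_eq_bot
      (spanierFamily_nonempty x₀) (spanierFamily_directed x₀) h
    obtain ⟨U, hU, rfl⟩ := hmem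
    obtain ⟨V, hV, hle⟩ := exists_pathCover_le hU x₀
    have hVbot : pathSpanierSubgroup x₀ V = ⊥ := le_bot_iff.mp (hbot ▸ hle)
    exact subgroupTopology_eq_bot_of_bot_mem ⟨V, hV, hVbot.symm⟩
end
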